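/- Let Σ̂^{Th} and Σ be symmetric J×J matrices whose entries satisfy: Σ̂^{Th}_{jk} = σ̂_{jk} 1{|σ̂_{jk}| ≥ ω θ̂_{jk}}, |σ̂_{jk} − σ_{jk}| ≤ b for all j,k, ω θ̂_{jk} > 2b, θ̂_{jk} ≤ C_U, and each row of Σ has at most s nonzero entries. Then ‖Σ̂^{Th} − Σ‖₂ ≤ max_j Σ_k |Σ̂^{Th}_{jk} − σ_{jk}| ≤ (2b + C_U ω) s. -/
import Mathlib

noncomputable def specNorm {J : ℕ} (A : Matrix (Fin J) (Fin J) ℝ) : ℝ :=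
  ‖Matrix.toEuclideanCLM (𝕜 := ℝ) A‖

lemma specNorm_le_max_row_sum {J : ℕ} (A : Matrix (Fin J) (Fin J) ℝ)
    (hA : A.IsHermitian) (M : ℝ) (hM : 0 ≤ M) (hrow : ∀ j, ∑ k, |A j k| ≤ M) :
    specNorm A ≤ M := by
  have hsym : ∀ j k, A j k = A k j := by
    intro j k
    simpa using hA.apply k j
  apply ContinuousLinearMap.opNorm_le_bound _ hM
  intro x
  have hmv : ∀ j, (Matrix.toEuclideanCLM (𝕜 := ℝ) A x) j = ∑ k, A j k * x k := by
    intro j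
    have h := congrFun (Matrix.ofLp_toEuclideanCLM (𝕜 := ℝ) A x) j
    simpa [Matrix.mulVec, dotProduct] using h
  have hsq : ‖Matrix.toEuclideanCLM (𝕜 := ℝ) A x‖ ^ 2 ≤ (M * ‖x‖) ^ 2 := by
    rw [EuclideanSpace.norm_eq, Real.sq_sqrt (by positivity)]
    have step1 : ∀ j, ‖(Matrix.toEuclideanCLM (𝕜 := ℝ) A x) j‖ ^ 2 ≤
        M * ∑ k, |A j k| * (x k) ^ 2 := by
      intro j
      rw [hmv, Real.norm_eq_abs, sq_abs]
      have habs : |∑ k, A j k * x k| ≤ ∑ k, |A j k| * |x k| := by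
        refine (Finset.abs_sum_le_sum_abs _ _).trans ?_
        simp [abs_mul, le_refl]
      have hcs : (∑ k, |A j k| * |x k|) ^ 2 ≤
          (∑ k, |A j k|) * ∑ k, |A j k| * (x k) ^ 2 := by
        refine Finset.sum_sq_le_sum_mul_sum_of_sq_eq_mul _
          (fun k _ => abs_nonneg _) (fun k _ => by positivity) (fun k _ => ?_)
        rw [mul_pow, sq_abs (x k)]; ring
      calc (∑ k, A j k * x k) ^ 2 ≤ (∑ k, |A j k| * |x k|) ^ 2 := by
            rw [← sq_abs]; exact pow_le_pow_left₀ (abs_nonneg _) habs 2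
        _ ≤ (∑ k, |A j k|) * ∑ k, |A j k| * (x k) ^ 2 := hcs
        _ ≤ M * ∑ k, |A j k| * (x k) ^ 2 := by
            apply mul_le_mul_of_nonneg_right (hrow j)
            positivity
    calc ∑ j, ‖(Matrix.toEuclideanCLM (𝕜 := ℝ) A x) j‖ ^ 2
        ≤ ∑ j, M * ∑ k, |A j k| * (x k) ^ 2 := Finset.sum_le_sum fun j _ => step1 j
      _ = M * ∑ k, (∑ j, |A j k|) * (x k) ^ 2 := by
          rw [← Finset.mul_sum, Finset.sum_comm]
          congr 1
          exact Finset.sum_congr rfl fun k _ => (Finset.sum_mul _ _ _).symm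
      _ ≤ M * ∑ k, M * (x k) ^ 2 := by
          apply mul_le_mul_of_nonneg_left _ hM
          apply Finset.sum_le_sum
          intro k _
          apply mul_le_mul_of_nonneg_right _ (sq_nonneg _)
          calc ∑ j, |A j k| = ∑ j, |A k j| := by
                exact Finset.sum_congr rfl fun j _ => by rw [hsym j k]
            _ ≤ M := hrow k
      _ = (M * ‖x‖) ^ 2 := by
          rw [EuclideanSpace.norm_eq, mul_pow, Real.sq_sqrt (by positivity),
            ← Finset.mul_sum]
          have : ∑ i, ‖x i‖ ^ 2 = ∑ i, (x i) ^ 2 :=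
            Finset.sum_congr rfl fun i _ => by rw [Real.norm_eq_abs, sq_abs]
          rw [this]; ring
  have h1 : (0:ℝ) ≤ ‖Matrix.toEuclideanCLM (𝕜 := ℝ) A x‖ := norm_nonneg _
  nlinarith [hsq, mul_nonneg hM (norm_nonneg x)]

/-- Spectral-norm bound for the adaptive thresholding covariance estimator:
`‖Σ̂ᵀʰ − Σ‖₂ ≤ max_j Σ_k |Σ̂ᵀʰ_{jk} − σ_{jk}| ≤ (2b + C_U ω) s`. -/
theorem thresholding_spectral_bound {J : ℕ} (hJ : 0 < J)
    (SThat S σhat θhat : Matrix (Fin J) (Fin J) ℝ)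
    (hSThat : SThat.IsHermitian) (hS : S.IsHermitian)
    (b ω CU : ℝ) (hb : 0 < b) (hω : 0 < ω) (hCU : 0 < CU) (s : ℕ)
    (hdef : ∀ j k, SThat j k = if ω * θhat j k ≤ |σhat j k| then σhat j k else 0)
    (hest : ∀ j k, |σhat j k - S j k| ≤ b)
    (hθlow : ∀ j k, 2 * b < ω * θhat j k)
    (hθhigh : ∀ j k, θhat j k ≤ CU)
    (hsparse : ∀ j, (Finset.univ.filter fun k => S j k ≠ 0).card ≤ s) :
    specNorm (SThat - S) ≤ (⨆ j, ∑ k, |SThat j k - S j k|) ∧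
      (⨆ j, ∑ k, |SThat j k - S j k|) ≤ (2 * b + CU * ω) * s := by
  haveI : Nonempty (Fin J) := Fin.pos_iff_nonempty.mp hJ
  have hpos : (0:ℝ) ≤ 2 * b + CU * ω := by positivity
  -- entrywise bound
  have key : ∀ j k, |SThat j k - S j k| ≤ if S j k ≠ 0 then 2 * b + CU * ω else 0 := by
    intro j k
    by_cases h : ω * θhat j k ≤ |σhat j k|
    · -- kept entry
      have hne : S j k ≠ 0 := by
        intro h0
        have h1 := hest j k
        rw [h0, sub_zero] at h1
        have := hθlow j k
        linarith [h.trans h1]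
      rw [if_pos hne, hdef j k, if_pos h]
      have hcw : 0 < CU * ω := mul_pos hCU hω
      have := hest j k
      linarith
    · -- thresholded entry
      rw [hdef j k, if_neg h, zero_sub, abs_neg]
      have hσ : |σhat j k| < ω * θhat j k := lt_of_not_ge h
      have hS' : |S j k| ≤ b + ω * CU := by
        have h1 : |S j k| ≤ |σhat j k| + b := by
          have := hest j k
          have := abs_sub_abs_le_abs_sub (S j k) (σhat j k)
          rw [abs_sub_comm] at this
          linarith
        have h2 : ω * θhat j k ≤ ω * CU :=
          mul_le_mul_of_nonneg_left (hθhigh j k) hω.le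
        linarith
      by_cases hne : S j k ≠ 0
      · rw [if_pos hne]; linarith
      · rw [if_neg hne]
        push_neg at hne
        simp [hne]
  -- row sum bound
  have rowbound : ∀ j, ∑ k, |SThat j k - S j k| ≤ (2 * b + CU * ω) * s := by
    intro j
    calc ∑ k, |SThat j k - S j k|
        ≤ ∑ k, if S j k ≠ 0 then 2 * b + CU * ω else 0 :=
          Finset.sum_le_sum fun k _ => key j k
      _ = (Finset.univ.filter fun k => S j k ≠ 0).card * (2 * b + CU * ω) := by
          rw [Finset.sum_ite, Finset.sum_const_zero, add_zero, Finset.sum_const,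
            nsmul_eq_mul]
      _ ≤ (s : ℝ) * (2 * b + CU * ω) := by
          apply mul_le_mul_of_nonneg_right _ hpos
          exact_mod_cast hsparse j
      _ = (2 * b + CU * ω) * s := by ring
  have hbdd : BddAbove (Set.range fun j => ∑ k, |SThat j k - S j k|) :=
    (Set.finite_range _).bddAbove
  constructor
  · refine specNorm_le_max_row_sum _ (hSThat.sub hS) _ ?_ ?_
    · exact le_trans (Finset.sum_nonneg fun k _ => abs_nonneg _)
        (le_ciSup hbdd (Classical.arbitrary _))
    · intro j
      simpa using le_ciSup hbdd j
  · exact ciSup_le rowbound
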